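/- Let α > 0, c ∈ ℝ. If f ∈ Dom J^{α+1}_{0+,c}, then J^α_{0+,c} f ∈ X_{c,loc}; in fact for every a > 0, ∫_0^a x^{c-1} (J^α_{0+,c}|f|)(x) dx = (1/(αΓ(α))) ∫_0^a u^{c-1} |f(u)| (log(a/u))^α du < ∞. -/

import Mathlib

open MeasureTheory Set

def memDomJ (α c : ℝ) (f : ℝ → ℂ) : Prop :=
  ∀ᵐ x ∂(volume.restrict (Set.Ioi (0 : ℝ))),
    (∫⁻ u in Set.Ioo (0 : ℝ) x,
      ENNReal.ofReal (u ^ (c - 1) * Real.log (x / u) ^ (α - 1) * ‖f u‖)) < ⊤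

noncomputable def hadamardJ (α c : ℝ) (f : ℝ → ℂ) (x : ℝ) : ℂ :=
  ((1 / Real.Gamma α : ℝ) : ℂ) *
    ∫ u in Set.Ioo (0 : ℝ) x,
      (((u / x) ^ c * Real.log (x / u) ^ (α - 1) / u : ℝ) : ℂ) * f u

/-- J^α_{0+,c}|f|, the Hadamard-type integral of the absolute value of f -/
noncomputable def hadamardJabs (α c : ℝ) (f : ℝ → ℂ) (x : ℝ) : ℝ :=
  (1 / Real.Gamma α) *
    ∫ u in Set.Ioo (0 : ℝ) x,
      ((u / x) ^ c * Real.log (x / u) ^ (α - 1) / u) * ‖f u‖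

lemma image_exp_Ioo (u a : ℝ) (hu : 0 < u) (hua : u < a) :
    (fun t => u * Real.exp t) '' Ioo 0 (Real.log (a / u)) = Ioo u a := by
  have hau : (0:ℝ) < a / u := div_pos (hu.trans hua) hu
  ext x
  simp only [mem_image, mem_Ioo]
  constructor
  · rintro ⟨t, ⟨ht0, htL⟩, rfl⟩
    have h1 : 1 < Real.exp t := Real.one_lt_exp_iff.mpr ht0
    constructor
    · nlinarith
    · have : Real.exp t < Real.exp (Real.log (a / u)) := Real.exp_lt_exp.mpr htL
      rw [Real.exp_log hau] at this
      calc u * Real.exp t < u * (a / u) := by nlinarith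
        _ = a := by field_simp
  · rintro ⟨hx1, hx2⟩
    have hxu : (0:ℝ) < x / u := div_pos (hu.trans hx1) hu
    refine ⟨Real.log (x / u), ⟨?_, ?_⟩, ?_⟩
    · exact Real.log_pos (by rw [lt_div_iff₀ hu]; linarith)
    · exact Real.log_lt_log hxu (by apply div_lt_div_of_pos_right hx2 hu)
    · rw [Real.exp_log hxu]; field_simp

lemma inner_ftc {α u a : ℝ} (hα : 0 < α) (hu : 0 < u) (hua : u < a) :
    ∫⁻ x in Ioo u a, ENNReal.ofReal (Real.log (x / u) ^ (α - 1) / x)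
      = ENNReal.ofReal (Real.log (a / u) ^ α / α) := by
  set L := Real.log (a / u) with hL
  have hL0 : 0 < L := Real.log_pos (by rw [lt_div_iff₀ hu]; linarith)
  have hs : MeasurableSet (Ioo (0:ℝ) L) := measurableSet_Ioo
  have hf' : ∀ t ∈ Ioo (0:ℝ) L,
      HasDerivWithinAt (fun t => u * Real.exp t) (u * Real.exp t) (Ioo 0 L) t :=
    fun t _ => ((Real.hasDerivAt_exp t).const_mul u).hasDerivWithinAt
  have hinj : InjOn (fun t => u * Real.exp t) (Ioo 0 L) := fun s _ t _ h => by
    simpa [hu.ne', Real.exp_eq_exp] using h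
  have himg := image_exp_Ioo u a hu hua
  set g : ℝ → ℝ := fun x => Real.log (x / u) ^ (α - 1) / x with hg
  have heq : EqOn (fun t => |u * Real.exp t| • g ((fun t => u * Real.exp t) t))
      (fun t => t ^ (α - 1)) (Ioo 0 L) := by
    intro t ht
    have he : (0:ℝ) < u * Real.exp t := by positivity
    simp only [smul_eq_mul, abs_of_pos he, hg]
    rw [mul_div_cancel_left₀ _ hu.ne', Real.log_exp]
    field_simp
  have hint0 : IntegrableOn (fun t : ℝ => t ^ (α - 1)) (Ioo 0 L) := by
    have := intervalIntegral.intervalIntegrable_rpow' (a := 0) (b := L)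
      (r := α - 1) (by linarith)
    rwa [intervalIntegrable_iff_integrableOn_Ioo_of_le hL0.le] at this
  have hint : IntegrableOn g (Ioo u a) := by
    rw [← himg,
      integrableOn_image_iff_integrableOn_abs_deriv_smul hs hf' hinj g]
    exact (integrableOn_congr_fun heq hs).mpr hint0
  have hval : ∫ x in Ioo u a, g x = L ^ α / α := by
    rw [← himg, integral_image_eq_integral_abs_deriv_smul hs hf' hinj g,
      setIntegral_congr_fun hs heq, ← MeasureTheory.integral_Ioc_eq_integral_Ioo,
      ← intervalIntegral.integral_of_le hL0.le, integral_rpow (Or.inl (by linarith))]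
    rw [Real.zero_rpow (by linarith : α - 1 + 1 ≠ 0)]
    ring_nf
  have hnn : 0 ≤ᵐ[volume.restrict (Ioo u a)] g := by
    filter_upwards [ae_restrict_mem measurableSet_Ioo] with x hx
    have hx0 : (0:ℝ) < x := hu.trans hx.1
    have hlog : (0:ℝ) ≤ Real.log (x / u) ^ (α - 1) := Real.rpow_nonneg
      (Real.log_nonneg (by rw [le_div_iff₀ hu]; linarith [hx.1])) _
    positivity
  rw [← ofReal_integral_eq_lintegral_ofReal hint hnn, hval]

lemma tonelli_swap {a : ℝ} (_ : 0 < a) {G : ℝ → ℝ → ENNReal}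
    (hG : Measurable (Function.uncurry G)) :
    ∫⁻ x in Ioo 0 a, ∫⁻ u in Ioo 0 x, G x u
      = ∫⁻ u in Ioo 0 a, ∫⁻ x in Ioo u a, G x u := by
  have hS : MeasurableSet {p : ℝ × ℝ | 0 < p.2 ∧ p.2 < p.1} :=
    (measurableSet_lt measurable_const measurable_snd).inter
      (measurableSet_lt measurable_snd measurable_fst)
  have key : Measurable (Function.uncurry
      (fun x u => (Ioo (0:ℝ) x).indicator (G x) u)) := by
    have : Function.uncurry (fun x u => (Ioo (0:ℝ) x).indicator (G x) u)
        = {p : ℝ × ℝ | 0 < p.2 ∧ p.2 < p.1}.indicator (Function.uncurry G) := by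
      ext ⟨x, u⟩
      simp [Function.uncurry, indicator_apply, Set.mem_Ioo, Set.mem_setOf_eq]
    rw [this]
    exact hG.indicator hS
  calc ∫⁻ x in Ioo 0 a, ∫⁻ u in Ioo 0 x, G x u
      = ∫⁻ x in Ioo 0 a, ∫⁻ u in Ioo 0 a, (Ioo (0:ℝ) x).indicator (G x) u := by
        refine setLIntegral_congr_fun measurableSet_Ioo (fun x hx => ?_)
        rw [lintegral_indicator measurableSet_Ioo, Measure.restrict_restrict measurableSet_Ioo,
          inter_eq_left.mpr (Ioo_subset_Ioo le_rfl hx.2.le)]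
    _ = ∫⁻ u in Ioo 0 a, ∫⁻ x in Ioo 0 a, (Ioo (0:ℝ) x).indicator (G x) u :=
        lintegral_lintegral_swap key.aemeasurable
    _ = ∫⁻ u in Ioo 0 a, ∫⁻ x in Ioo u a, G x u := by
        refine setLIntegral_congr_fun measurableSet_Ioo (fun u hu => ?_)
        have h1 : ∀ x : ℝ, (Ioo (0:ℝ) x).indicator (G x) u
            = (Ioi u).indicator (fun x => G x u) x := by
          intro x
          simp only [indicator_apply, mem_Ioo, mem_Ioi, hu.1, true_and]
        rw [lintegral_congr h1]
        have hset : Ioi u ∩ Ioo 0 a = Ioo u a := by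
          ext y
          simp only [mem_inter_iff, mem_Ioi, mem_Ioo]
          exact ⟨fun ⟨k1, k2, k3⟩ => ⟨k1, k3⟩, fun ⟨k1, k2⟩ => ⟨k1, hu.1.trans k1, k2⟩⟩
        rw [lintegral_indicator measurableSet_Ioi, Measure.restrict_restrict measurableSet_Ioi,
          hset]

lemma kernel_alg {c x u : ℝ} (hu : 0 < u) (hx : 0 < x) (B r : ℝ) :
    x ^ (c - 1) * ((u / x) ^ c * B / u * r) = u ^ (c - 1) * r * (B / x) := by
  rw [Real.div_rpow hu.le hx.le, Real.rpow_sub hx, Real.rpow_sub hu, Real.rpow_one,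
    Real.rpow_one]
  have h1 : x ^ c ≠ 0 := (Real.rpow_pos_of_pos hx c).ne'
  have h2 : u ^ c ≠ 0 := (Real.rpow_pos_of_pos hu c).ne'
  field_simp

theorem stmt12 (α c : ℝ) (hα : 0 < α) (f : ℝ → ℂ) (hmeas : Measurable f)
    (hdom : memDomJ (α + 1) c f) :
    (∀ a : ℝ, 0 < a →
      IntegrableOn (fun x : ℝ => x ^ (c - 1) * ‖hadamardJ α c f x‖)
        (Set.Ioo 0 a)) ∧
    (∀ a : ℝ, 0 < a →
      IntegrableOn
        (fun u : ℝ => u ^ (c - 1) * ‖f u‖ * Real.log (a / u) ^ α)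
        (Set.Ioo 0 a) ∧
      (∫ x in Set.Ioo (0 : ℝ) a, x ^ (c - 1) * hadamardJabs α c f x)
        = (1 / (α * Real.Gamma α)) *
            ∫ u in Set.Ioo (0 : ℝ) a,
              u ^ (c - 1) * ‖f u‖ * Real.log (a / u) ^ α) := by
  have hΓ : 0 < Real.Gamma α := Real.Gamma_pos_of_pos hα
  set k : ℝ → ℝ → ℝ := fun x u => (u / x) ^ c * Real.log (x / u) ^ (α - 1) / u with hk
  set G : ℝ → ℝ → ENNReal := fun x u =>
    ENNReal.ofReal (u ^ (c - 1) * ‖f u‖ * (Real.log (x / u) ^ (α - 1) / x))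
    with hGdef
  have hS : MeasurableSet {p : ℝ × ℝ | 0 < p.2 ∧ p.2 < p.1} :=
    (measurableSet_lt measurable_const measurable_snd).inter
      (measurableSet_lt measurable_snd measurable_fst)
  have habsm : Measurable (fun z : ℂ => ‖z‖) := continuous_norm.measurable
  have mG : Measurable (Function.uncurry G) := by
    apply ENNReal.measurable_ofReal.comp
    exact ((measurable_snd.pow_const _).mul (habsm.comp (hmeas.comp measurable_snd))).mul
      (((Real.measurable_log.comp (measurable_fst.div measurable_snd)).pow_const _).div
        measurable_fst)
  have mkf : Measurable (fun p : ℝ × ℝ => k p.1 p.2) :=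
    ((measurable_snd.div measurable_fst).pow_const c).mul
      ((Real.measurable_log.comp (measurable_fst.div measurable_snd)).pow_const _)
      |>.div measurable_snd
  -- nonnegativity of the kernel
  have hknn : ∀ x u : ℝ, 0 < u → u < x → 0 ≤ k x u := by
    intro x u hu hux
    have hx : (0:ℝ) < x := hu.trans hux
    have hl : (0:ℝ) ≤ Real.log (x / u) := Real.log_nonneg (by rw [le_div_iff₀ hu]; linarith)
    have h1 : (0:ℝ) ≤ (u / x) ^ c := Real.rpow_nonneg (div_nonneg hu.le hx.le) c
    have h2 : (0:ℝ) ≤ Real.log (x / u) ^ (α - 1) := Real.rpow_nonneg hl _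
    simp only [hk]
    positivity
  set N : ℝ → ENNReal := fun x => ∫⁻ u in Ioo 0 x, G x u with hNdef
  have mN : Measurable N := by
    have h1 : N = fun x => ∫⁻ u,
        ({p : ℝ × ℝ | 0 < p.2 ∧ p.2 < p.1}.indicator (Function.uncurry G)) (x, u) := by
      funext x
      show (∫⁻ u in Ioo 0 x, G x u) = _
      rw [← lintegral_indicator measurableSet_Ioo]
      refine lintegral_congr fun u => ?_
      simp [indicator_apply, Function.uncurry, mem_Ioo, mem_setOf_eq]
    rw [h1]
    exact (mG.indicator hS).lintegral_prod_right'
  set R : ℝ → ENNReal := fun a => ∫⁻ u in Ioo 0 a,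
    ENNReal.ofReal (u ^ (c - 1) * ‖f u‖ * Real.log (a / u) ^ α) with hRdef
  -- finiteness of R
  have hRfin : ∀ a : ℝ, 0 < a → R a < ⊤ := by
    intro a ha
    have h2 := ae_restrict_of_ae_restrict_of_subset (Ioi_subset_Ioi ha.le) hdom
    have hne : volume.restrict (Ioi a) ≠ 0 := by
      intro h
      have := congrArg (fun μ => μ (Ioi a)) h
      simp [Measure.restrict_apply measurableSet_Ioi, Real.volume_Ioi] at this
    haveI : (ae (volume.restrict (Ioi a))).NeBot := ae_neBot.mpr hne
    obtain ⟨x₀, hx₀P, hx₀mem⟩ := (h2.and (ae_restrict_mem measurableSet_Ioi)).exists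
    have hax₀ : a < x₀ := hx₀mem
    calc R a ≤ ∫⁻ u in Ioo 0 a,
        ENNReal.ofReal (u ^ (c - 1) * Real.log (x₀ / u) ^ (α + 1 - 1) * ‖f u‖) := by
          refine lintegral_mono_ae ?_
          filter_upwards [ae_restrict_mem measurableSet_Ioo] with u hu
          apply ENNReal.ofReal_le_ofReal
          have h01 : (0:ℝ) ≤ u ^ (c - 1) * ‖f u‖ :=
            mul_nonneg (Real.rpow_nonneg hu.1.le _) (norm_nonneg _)
          have hlog : Real.log (a / u) ^ α ≤ Real.log (x₀ / u) ^ (α + 1 - 1) := by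
            rw [show α + 1 - 1 = α by ring]
            refine Real.rpow_le_rpow
              (Real.log_nonneg (by rw [le_div_iff₀ hu.1]; linarith [hu.2]))
              (Real.log_le_log (div_pos ha hu.1)
                ((div_le_div_iff_of_pos_right hu.1).mpr hax₀.le)) hα.le
          calc u ^ (c - 1) * ‖f u‖ * Real.log (a / u) ^ α
              ≤ u ^ (c - 1) * ‖f u‖ * Real.log (x₀ / u) ^ (α + 1 - 1) :=
                mul_le_mul_of_nonneg_left hlog h01
            _ = u ^ (c - 1) * Real.log (x₀ / u) ^ (α + 1 - 1) * ‖f u‖ := by ring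
      _ ≤ ∫⁻ u in Ioo 0 x₀,
          ENNReal.ofReal (u ^ (c - 1) * Real.log (x₀ / u) ^ (α + 1 - 1) * ‖f u‖) :=
          lintegral_mono_set (Ioo_subset_Ioo le_rfl hax₀.le)
      _ < ⊤ := hx₀P
  -- the Tonelli computation
  have hEeq : ∀ a : ℝ, 0 < a →
      ∫⁻ x in Ioo 0 a, N x = ENNReal.ofReal (1 / α) * R a := by
    intro a ha
    calc ∫⁻ x in Ioo 0 a, N x
        = ∫⁻ u in Ioo 0 a, ∫⁻ x in Ioo u a, G x u := tonelli_swap ha mG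
      _ = ∫⁻ u in Ioo 0 a, ENNReal.ofReal (1 / α) *
            ENNReal.ofReal (u ^ (c - 1) * ‖f u‖ * Real.log (a / u) ^ α) := by
          refine setLIntegral_congr_fun measurableSet_Ioo (fun u hu => ?_)
          have hgu : (0:ℝ) ≤ u ^ (c - 1) * ‖f u‖ :=
            mul_nonneg (Real.rpow_nonneg hu.1.le _) (norm_nonneg _)
          have h1 : ∀ x : ℝ, G x u
              = ENNReal.ofReal (u ^ (c - 1) * ‖f u‖) *
                ENNReal.ofReal (Real.log (x / u) ^ (α - 1) / x) := fun x => by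
            rw [hGdef, ← ENNReal.ofReal_mul hgu]
          rw [lintegral_congr h1, lintegral_const_mul' _ _ ENNReal.ofReal_ne_top,
            inner_ftc hα hu.1 hu.2, ← ENNReal.ofReal_mul hgu,
            ← ENNReal.ofReal_mul (by positivity : (0:ℝ) ≤ 1 / α)]
          congr 1
          field_simp
      _ = ENNReal.ofReal (1 / α) * R a := lintegral_const_mul' _ _ ENNReal.ofReal_ne_top
  have hEfin : ∀ a : ℝ, 0 < a → (∫⁻ x in Ioo 0 a, N x) < ⊤ := by
    intro a ha
    rw [hEeq a ha]
    exact ENNReal.mul_lt_top ENNReal.ofReal_lt_top (hRfin a ha)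
  have hNlt : ∀ a : ℝ, 0 < a → ∀ᵐ x ∂(volume.restrict (Ioo (0:ℝ) a)), N x < ⊤ :=
    fun a ha => ae_lt_top mN (hEfin a ha).ne
  -- pointwise description of x^(c-1) * hadamardJabs
  have hIeq : ∀ x : ℝ, 0 < x →
      ENNReal.ofReal (x ^ (c - 1)) *
        (∫⁻ u in Ioo 0 x, ENNReal.ofReal (k x u * ‖f u‖)) = N x := by
    intro x hx
    rw [← lintegral_const_mul' _ _ ENNReal.ofReal_ne_top]
    refine setLIntegral_congr_fun measurableSet_Ioo (fun u hu => ?_)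
    rw [← ENNReal.ofReal_mul (Real.rpow_nonneg hx.le _), hGdef]
    congr 1
    exact kernel_alg hu.1 hx _ _
  have hJabsInt : ∀ x : ℝ, 0 < x →
      ∫ u in Ioo 0 x, k x u * ‖f u‖
        = (∫⁻ u in Ioo 0 x, ENNReal.ofReal (k x u * ‖f u‖)).toReal := by
    intro x hx
    refine integral_eq_lintegral_of_nonneg_ae ?_ ?_
    · filter_upwards [ae_restrict_mem measurableSet_Ioo] with u hu
      exact mul_nonneg (hknn x u hu.1 hu.2) (norm_nonneg _)
    · exact ((mkf.comp measurable_prodMk_left).mul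
        (habsm.comp hmeas)).aestronglyMeasurable
  have hJabs : ∀ x : ℝ, 0 < x →
      x ^ (c - 1) * hadamardJabs α c f x = (1 / Real.Gamma α) * (N x).toReal := by
    intro x hx
    have h1 : hadamardJabs α c f x
        = (1 / Real.Gamma α) *
          (∫⁻ u in Ioo 0 x, ENNReal.ofReal (k x u * ‖f u‖)).toReal := by
      rw [hadamardJabs, ← hJabsInt x hx]
    rw [h1, ← hIeq x hx, ENNReal.toReal_mul, ENNReal.toReal_ofReal (Real.rpow_nonneg hx.le _)]
    ring
  -- |hadamardJ| ≤ hadamardJabs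
  have hJle : ∀ x : ℝ, 0 < x →
      ‖hadamardJ α c f x‖ ≤ hadamardJabs α c f x := by
    intro x hx
    rw [hadamardJ, hadamardJabs, norm_mul, Complex.norm_real, Real.norm_eq_abs,
      abs_of_pos (by positivity : (0:ℝ) < 1 / Real.Gamma α)]
    refine mul_le_mul_of_nonneg_left ?_ (by positivity)
    calc ‖∫ u in Ioo (0:ℝ) x, ((k x u : ℝ) : ℂ) * f u‖
        = ‖∫ u in Ioo (0:ℝ) x, ((k x u : ℝ) : ℂ) * f u‖ := rfl
      _ ≤ ∫ u in Ioo (0:ℝ) x, ‖((k x u : ℝ) : ℂ) * f u‖ := norm_integral_le_integral_norm _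
      _ = ∫ u in Ioo (0:ℝ) x, k x u * ‖f u‖ := by
          refine setIntegral_congr_fun measurableSet_Ioo fun u hu => ?_
          rw [norm_mul, Complex.norm_real, Real.norm_eq_abs,
            abs_of_nonneg (hknn x u hu.1 hu.2)]
  -- measurability of hadamardJ
  have mJ : Measurable (hadamardJ α c f) := by
    have hF : StronglyMeasurable
        ({p : ℝ × ℝ | 0 < p.2 ∧ p.2 < p.1}.indicator
          (fun p : ℝ × ℝ => ((k p.1 p.2 : ℝ) : ℂ) * f p.2)) :=
      (((Complex.measurable_ofReal.comp mkf).mul (hmeas.comp measurable_snd)).indicator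
        hS).stronglyMeasurable
    have h2 : hadamardJ α c f = fun x => ((1 / Real.Gamma α : ℝ) : ℂ) *
        ∫ u, ({p : ℝ × ℝ | 0 < p.2 ∧ p.2 < p.1}.indicator
          (fun p : ℝ × ℝ => ((k p.1 p.2 : ℝ) : ℂ) * f p.2)) (x, u) := by
      funext x
      rw [hadamardJ]
      congr 1
      rw [← integral_indicator measurableSet_Ioo]
      refine integral_congr_ae (ae_of_all _ fun u => ?_)
      by_cases h : u ∈ Ioo (0:ℝ) x
      · have hm : ((x, u) : ℝ × ℝ) ∈ {p : ℝ × ℝ | 0 < p.2 ∧ p.2 < p.1} := ⟨h.1, h.2⟩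
        rw [indicator_of_mem h]
        exact (indicator_of_mem hm (fun p : ℝ × ℝ => ((k p.1 p.2 : ℝ) : ℂ) * f p.2)).symm
      · have hm : ((x, u) : ℝ × ℝ) ∉ {p : ℝ × ℝ | 0 < p.2 ∧ p.2 < p.1} :=
          fun hc => h ⟨hc.1, hc.2⟩
        rw [indicator_of_notMem h]
        exact (indicator_of_notMem hm (fun p : ℝ × ℝ => ((k p.1 p.2 : ℝ) : ℂ) * f p.2)).symm
    rw [h2]
    exact (measurable_const.mul hF.integral_prod_right'.measurable)
  refine ⟨?_, ?_⟩
  · -- first claim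
    intro a ha
    refine ⟨((measurable_id.pow_const _).mul (habsm.comp mJ)).aestronglyMeasurable, ?_⟩
    rw [hasFiniteIntegral_iff_ofReal ?_]
    · calc ∫⁻ x in Ioo 0 a, ENNReal.ofReal (x ^ (c - 1) * ‖hadamardJ α c f x‖)
          ≤ ∫⁻ x in Ioo 0 a, ENNReal.ofReal (1 / Real.Gamma α) * N x := by
            refine lintegral_mono_ae ?_
            filter_upwards [ae_restrict_mem measurableSet_Ioo, hNlt a ha] with x hx hNx
            calc ENNReal.ofReal (x ^ (c - 1) * ‖hadamardJ α c f x‖)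
                ≤ ENNReal.ofReal ((1 / Real.Gamma α) * (N x).toReal) := by
                  refine ENNReal.ofReal_le_ofReal ?_
                  rw [← hJabs x hx.1]
                  exact mul_le_mul_of_nonneg_left (hJle x hx.1)
                    (Real.rpow_nonneg hx.1.le _)
              _ = ENNReal.ofReal (1 / Real.Gamma α) * N x := by
                  rw [ENNReal.ofReal_mul (by positivity), ENNReal.ofReal_toReal hNx.ne]
        _ = ENNReal.ofReal (1 / Real.Gamma α) * ∫⁻ x in Ioo 0 a, N x :=
            lintegral_const_mul' _ _ ENNReal.ofReal_ne_top
        _ < ⊤ := ENNReal.mul_lt_top ENNReal.ofReal_lt_top (hEfin a ha)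
    · filter_upwards [ae_restrict_mem measurableSet_Ioo] with x hx
      exact mul_nonneg (Real.rpow_nonneg hx.1.le _) (norm_nonneg _)
  · -- second claim
    intro a ha
    have hnn : 0 ≤ᵐ[volume.restrict (Ioo (0:ℝ) a)]
        fun u => u ^ (c - 1) * ‖f u‖ * Real.log (a / u) ^ α := by
      filter_upwards [ae_restrict_mem measurableSet_Ioo] with u hu
      have h1 : (0:ℝ) ≤ Real.log (a / u) ^ α := Real.rpow_nonneg
        (Real.log_nonneg (by rw [le_div_iff₀ hu.1]; linarith [hu.2])) _
      exact mul_nonneg (mul_nonneg (Real.rpow_nonneg hu.1.le _) (norm_nonneg _)) h1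
    have hmR : Measurable (fun u : ℝ =>
        u ^ (c - 1) * ‖f u‖ * Real.log (a / u) ^ α) :=
      ((measurable_id.pow_const _).mul (habsm.comp hmeas)).mul
        ((Real.measurable_log.comp (measurable_const.div measurable_id)).pow_const _)
    constructor
    · exact ⟨hmR.aestronglyMeasurable, by rw [hasFiniteIntegral_iff_ofReal hnn]; exact hRfin a ha⟩
    · have hcong : EqOn (fun x : ℝ => x ^ (c - 1) * hadamardJabs α c f x)
          (fun x => (1 / Real.Gamma α) * (N x).toReal) (Ioo 0 a) :=
        fun x hx => hJabs x hx.1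
      rw [setIntegral_congr_fun measurableSet_Ioo hcong, integral_const_mul]
      have h2 : ∫ x in Ioo (0:ℝ) a, (N x).toReal
          = (ENNReal.ofReal (1 / α) * R a).toReal := by
        rw [integral_eq_lintegral_of_nonneg_ae (ae_of_all _ fun x => ENNReal.toReal_nonneg)
          mN.ennreal_toReal.aestronglyMeasurable]
        congr 1
        rw [← hEeq a ha]
        refine lintegral_congr_ae ?_
        filter_upwards [hNlt a ha] with x hx
        exact ENNReal.ofReal_toReal hx.ne
      have h3 : ∫ u in Ioo (0:ℝ) a, u ^ (c - 1) * ‖f u‖ * Real.log (a / u) ^ α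
          = (R a).toReal :=
        integral_eq_lintegral_of_nonneg_ae hnn hmR.aestronglyMeasurable
      rw [h2, h3, ENNReal.toReal_mul, ENNReal.toReal_ofReal (by positivity)]
      ring
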